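/- Gray's curvature conditions imply each other in sequence: if a Riemannian curvature tensor R on an almost Hermitian manifold satisfies (G1): R(X,Y,Z,W) = R(X,Y,JZ,JW) for all vectors, then it satisfies (G2): R(X,Y,Z,W) - R(JX,JY,Z,W) = R(JX,Y,JZ,W) + R(JX,Y,Z,JW); and (G2) implies (G3): R(X,Y,Z,W) = R(JX,JY,JZ,JW). -/

import Mathlib

open scoped RealInnerProductSpace

/-- Gray's curvature conditions imply each other in sequence:
(G1) implies (G2), and (G2) implies (G3), for an algebraic curvature tensor
on a real inner product space with an orthogonal complex structure. -/
theorem gray_G1_implies_G2_and_G2_implies_G3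
    {V : Type*} [NormedAddCommGroup V] [InnerProductSpace ℝ V]
    (J : V →ₗ[ℝ] V)
    (hJ2 : ∀ x, J (J x) = -x)
    (hJorth : ∀ x y, ⟪J x, J y⟫ = ⟪x, y⟫)
    (R : V →ₗ[ℝ] V →ₗ[ℝ] V →ₗ[ℝ] V →ₗ[ℝ] ℝ)
    (hskew : ∀ x y z w, R x y z w = - R y x z w)
    (hpair : ∀ x y z w, R x y z w = R z w x y)
    (hbianchi : ∀ x y z w, R x y z w + R y z x w + R z x y w = 0) :
    ((∀ x y z w, R x y z w = R x y (J z) (J w)) →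
      (∀ x y z w, R x y z w - R (J x) (J y) z w
        = R (J x) y (J z) w + R (J x) y z (J w)))
    ∧ ((∀ x y z w, R x y z w - R (J x) (J y) z w
        = R (J x) y (J z) w + R (J x) y z (J w)) →
      (∀ x y z w, R x y z w = R (J x) (J y) (J z) (J w))) := by
  constructor
  · intro hG1 x y z w
    have h1 : R (J x) (J y) z w = R x y z w := by
      rw [hpair (J x) (J y) z w, ← hG1 z w x y, hpair]
    have h2 : R (J x) y z (J w) = - R (J x) y (J z) w := by
      have := hG1 (J x) y z (J w)
      rw [hJ2, map_neg] at this
      linarith [this]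
    rw [h1, h2]; ring
  · intro hG2 x y z w
    have e1 := hG2 x y z w
    have e2 := hG2 x y (J z) (J w)
    have e3 := hG2 x (J y) z (J w)
    have e4 := hG2 (J x) y z (J w)
    have hneg : ∀ a b c d, R (-a) b c d = - R a b c d := by
      intro a b c d
      have h := congrArg (fun f => f b c d) (map_add R (-a) a)
      simp only [neg_add_cancel, map_zero, LinearMap.add_apply, LinearMap.zero_apply] at h
      linarith
    simp only [hJ2, map_neg, LinearMap.neg_apply, LinearMap.map_neg, hneg] at e2 e3 e4
    linarith
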